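/- arXiv:1711.09461 — 2 statements merged into one kernel-verified Lean document; each statement's English description precedes it below -/
import Mathlib

section
/- Suppose φ is UCI with Denjoy-Wolff point a ∈ ∂𝔻, ψ ∈ H^∞ is continuous at a, and ψ(a) ≠ 0. Then ρ(W_{ψ,φ}) = |ψ(a)|·ρ(C_φ). -/
open Complex Metric Filter Set
open scoped ENNReal NNReal Topology InnerProductSpace

noncomputable section

/-- The open unit disk in ℂ. -/
def unitDisk : Set ℂ := Metric.ball (0 : ℂ) 1

/-- The Hardy space `H²`, modeled by the ℓ² space of Taylor coefficient sequences:
`f ∈ H²` corresponds to the analytic function `z ↦ ∑ₙ f n * zⁿ` on the disk, and the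
`H²` norm is the `ℓ²` norm of the coefficients. -/
abbrev H2 := lp (fun _ : ℕ => ℂ) 2

/-- Evaluation of an element of `H²` (given by its coefficient sequence) at a point. -/
def H2.eval (f : H2) (z : ℂ) : ℂ := ∑' n, f n * z ^ n

/-- `φ` is an analytic self-map of the unit disk. -/
def IsSelfMapOfDisk (φ : ℂ → ℂ) : Prop :=
  DifferentiableOn ℂ φ unitDisk ∧ Set.MapsTo φ unitDisk unitDisk

/-- `ψ ∈ H^∞`: bounded analytic function on the disk. -/
def MemHinf (ψ : ℂ → ℂ) : Prop :=
  DifferentiableOn ℂ ψ unitDisk ∧ BddAbove ((fun z => ‖ψ z‖) '' unitDisk)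

/-- The supremum norm `‖ψ‖_∞` of `ψ` over the disk. -/
def hinfNorm (ψ : ℂ → ℂ) : ℝ := sSup ((fun z => ‖ψ z‖) '' unitDisk)

/-- `W` is the weighted composition operator `W_{ψ,φ}` on `H²`:
`(W f)(z) = ψ(z) * f(φ(z))` for every `f ∈ H²` and `z` in the disk. -/
def IsWCO (ψ φ : ℂ → ℂ) (W : H2 →L[ℂ] H2) : Prop :=
  ∀ f : H2, ∀ z ∈ unitDisk, H2.eval (W f) z = ψ z * H2.eval f (φ z)

/-- `C` is the composition operator `C_φ` on `H²`: `(C f)(z) = f(φ(z))`. -/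
def IsCO (φ : ℂ → ℂ) (C : H2 →L[ℂ] H2) : Prop :=
  ∀ f : H2, ∀ z ∈ unitDisk, H2.eval (C f) z = H2.eval f (φ z)

/-- `a` is the Denjoy–Wolff point of `φ`: `a` lies in the closed disk and the iterates
of `φ` converge to `a` uniformly on compact subsets of the open disk. -/
def IsDenjoyWolff (φ : ℂ → ℂ) (a : ℂ) : Prop :=
  a ∈ closure unitDisk ∧
    ∀ K : Set ℂ, K ⊆ unitDisk → IsCompact K →
      TendstoUniformlyOn (fun n => φ^[n]) (fun _ => a) atTop K

/-- A bounded operator is normaloid if its norm equals its spectral radius. -/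
def IsNormaloid (T : H2 →L[ℂ] H2) : Prop :=
  spectralRadius ℂ T = (‖T‖₊ : ℝ≥0∞)

/-- The reproducing kernel of `H²` at `a`: `K_a(z) = 1/(1 - conj(a)·z)`. -/
def hardyKernel (a z : ℂ) : ℂ := 1 / (1 - (starRingEnd ℂ) a * z)

section St12Aux

open MeasureTheory Real Filter Complex

namespace St12
set_option linter.unusedSectionVars false
set_option linter.unusedVariables false

/-- point on circle of radius `r` -/
def zf (r θ : ℝ) : ℂ := (r : ℂ) * Complex.exp (θ * Complex.I)

lemma norm_zf {r : ℝ} (h0 : 0 ≤ r) (θ : ℝ) : ‖zf r θ‖ = r := by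
  simp [zf, map_mul, Complex.norm_exp_ofReal_mul_I,
    Complex.norm_real, _root_.abs_of_nonneg h0]

lemma continuous_zf {r : ℝ} : Continuous (zf r) := by
  apply continuous_const.mul
  exact Complex.continuous_exp.comp ((Complex.continuous_ofReal).mul continuous_const)

lemma star_zf (r θ : ℝ) :
    (starRingEnd ℂ) (zf r θ) = (r : ℂ) * Complex.exp (-(θ:ℂ) * Complex.I) := by
  rw [zf, map_mul, Complex.conj_ofReal, ← Complex.exp_conj, map_mul, Complex.conj_ofReal,
    Complex.conj_I]
  ring_nf

lemma star_zf_pow_mul_zf_pow (r : ℝ) (j k : ℕ) (θ : ℝ) :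
    (starRingEnd ℂ) (zf r θ) ^ j * zf r θ ^ k
      = (r:ℂ)^(j+k) * Complex.exp ((((k:ℤ) - (j:ℤ) : ℤ) : ℂ) * Complex.I * θ) := by
  rw [star_zf, zf, mul_pow, mul_pow, ← Complex.exp_nat_mul, ← Complex.exp_nat_mul,
    pow_add]
  rw [mul_mul_mul_comm, ← Complex.exp_add]
  congr 1
  push_cast
  ring

lemma integral_exp_Ioc (m : ℤ) :
    ∫ θ in Set.Ioc (0:ℝ) (2*π), Complex.exp ((m : ℂ) * Complex.I * θ)
      = if m = 0 then ((2*π:ℝ):ℂ) else 0 := by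
  rw [← intervalIntegral.integral_of_le (by positivity : (0:ℝ) ≤ 2*π)]
  split_ifs with h
  · subst h
    simp only [Int.cast_zero, zero_mul, Complex.exp_zero]
    rw [intervalIntegral.integral_const]
    norm_num
  · have hc : (m : ℂ) * Complex.I ≠ 0 :=
      mul_ne_zero (Int.cast_ne_zero.mpr h) Complex.I_ne_zero
    rw [integral_exp_mul_complex hc]
    have h2 : (m:ℂ) * Complex.I * ((2*π:ℝ):ℂ) = (m:ℤ) * (2 * (π:ℂ) * Complex.I) := by
      push_cast; ring
    rw [h2, Complex.exp_int_mul_two_pi_mul_I]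
    simp

lemma swap_tsum_integral (F : ℕ → ℝ → ℂ) (hcont : ∀ k, Continuous (F k))
    (B : ℕ → ℝ) (hB : ∀ k θ, ‖F k θ‖ ≤ B k) (hBsum : Summable B) :
    ∫ θ in Set.Ioc (0:ℝ) (2*π), ∑' k, F k θ = ∑' k, ∫ θ in Set.Ioc (0:ℝ) (2*π), F k θ := by
  refine (MeasureTheory.integral_tsum_of_summable_integral_norm ?_ ?_).symm
  · intro k; exact (hcont k).integrableOn_Ioc
  · have hB0 : ∀ k, 0 ≤ B k := fun k => le_trans (norm_nonneg _) (hB k 0)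
    refine Summable.of_nonneg_of_le
      (fun k => integral_nonneg (fun θ => norm_nonneg _)) ?_ (hBsum.mul_right (2*π))
    intro k
    calc ∫ θ in Set.Ioc (0:ℝ) (2*π), ‖F k θ‖
        ≤ ∫ _ in Set.Ioc (0:ℝ) (2*π), B k := by
          refine setIntegral_mono_on ((hcont k).norm.integrableOn_Ioc)
            (integrableOn_const ?_) measurableSet_Ioc (fun θ _ => hB k θ)
          rw [Real.volume_Ioc]
          exact ENNReal.ofReal_ne_top
      _ = B k * (2*π) := by
          rw [setIntegral_const, measureReal_def, Real.volume_Ioc, smul_eq_mul, ENNReal.toReal_ofReal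
            (by have := Real.pi_pos; linarith : (0:ℝ) ≤ 2*π - 0)]
          ring


/-- the boundary function on the circle of radius `r` -/
def Gf (c : ℕ → ℂ) (r θ : ℝ) : ℂ := ∑' k, c k * (zf r θ)^k

lemma norm_exp_int_mul_I (m : ℤ) (θ : ℝ) : ‖Complex.exp ((m:ℂ) * Complex.I * θ)‖ = 1 := by
  have : (m:ℂ) * Complex.I * θ = (((m * θ : ℝ)) : ℂ) * Complex.I := by push_cast; ring
  rw [this, Complex.norm_exp_ofReal_mul_I]


section
variable {c : ℕ → ℂ} {A r : ℝ} (hA : ∀ k, ‖c k‖ ≤ A) (h0 : 0 ≤ r) (h1 : r < 1)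

lemma conj_mul_self (w : ℂ) : (starRingEnd ℂ) w * w = ((‖w‖^2 : ℝ) : ℂ) := by
  rw [mul_comm, Complex.mul_conj, Complex.normSq_eq_norm_sq]


include hA h0 h1

lemma term_bound (k : ℕ) (θ : ℝ) : ‖c k * (zf r θ)^k‖ ≤ A * r ^ k := by
  rw [norm_mul, norm_pow, norm_zf h0]
  exact mul_le_mul_of_nonneg_right (hA k) (by positivity)

omit hA in
lemma geo_summable : Summable (fun k => A * r ^ k) :=
  (summable_geometric_of_lt_one h0 h1).mul_left A

lemma Gf_cont : Continuous (Gf c r) := by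
  refine continuous_tsum (fun k => ?_) (geo_summable h0 h1) (fun k θ => term_bound hA h0 h1 k θ)
  exact continuous_const.mul (continuous_zf.pow k)

lemma Gf_term_summable (θ : ℝ) : Summable (fun k => c k * (zf r θ)^k) :=
  Summable.of_norm (Summable.of_nonneg_of_le (fun k => norm_nonneg _)
    (fun k => term_bound hA h0 h1 k θ) (geo_summable h0 h1))

lemma Gf_bound (θ : ℝ) : ‖Gf c r θ‖ ≤ A * (1 - r)⁻¹ := by
  have hs : Summable (fun k => ‖c k * (zf r θ)^k‖) :=
    Summable.of_nonneg_of_le (fun k => norm_nonneg _) (fun k => term_bound hA h0 h1 k θ)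
      (geo_summable h0 h1)
  calc ‖Gf c r θ‖ ≤ ∑' k, ‖c k * (zf r θ)^k‖ := norm_tsum_le_tsum_norm hs
    _ ≤ ∑' k, A * r ^ k :=
        Summable.tsum_le_tsum (fun k => term_bound hA h0 h1 k θ) hs (geo_summable h0 h1)
    _ = A * (1 - r)⁻¹ := by rw [tsum_mul_left, tsum_geometric_of_lt_one h0 h1]

lemma fourier_coeff (j : ℕ) :
    ∫ θ in Set.Ioc (0:ℝ) (2*π), (starRingEnd ℂ) (zf r θ) ^ j * Gf c r θ
      = c j * (r:ℂ)^(2*j) * ((2*π:ℝ):ℂ) := by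
  have key : ∀ θ : ℝ, (starRingEnd ℂ) (zf r θ) ^ j * Gf c r θ
      = ∑' k, c k * ((r:ℂ)^(j+k) * Complex.exp ((((k:ℤ) - (j:ℤ) : ℤ):ℂ) * Complex.I * θ)) := by
    intro θ
    rw [Gf, ← tsum_mul_left]
    congr 1; funext k
    rw [← star_zf_pow_mul_zf_pow]; ring
  simp_rw [key]
  rw [swap_tsum_integral _ ?cont (fun k => (A * r^j) * r^k) ?bnd
    ((summable_geometric_of_lt_one h0 h1).mul_left (A * r ^ j))]
  case cont =>
    intro k
    apply continuous_const.mul (continuous_const.mul _)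
    exact Complex.continuous_exp.comp (continuous_const.mul Complex.continuous_ofReal)
  case bnd =>
    intro k θ
    rw [norm_mul, norm_mul, norm_exp_int_mul_I, mul_one, norm_pow, Complex.norm_real,
      Real.norm_eq_abs, _root_.abs_of_nonneg h0, pow_add, ← mul_assoc]
    apply mul_le_mul_of_nonneg_right _ (by positivity)
    exact mul_le_mul_of_nonneg_right (hA k) (by positivity)
  -- now compute the sum of integrals
  have hint : ∀ k : ℕ, (∫ θ in Set.Ioc (0:ℝ) (2*π),
      c k * ((r:ℂ)^(j+k) * Complex.exp ((((k:ℤ) - (j:ℤ) : ℤ):ℂ) * Complex.I * θ)))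
      = (c k * (r:ℂ)^(j+k)) * (if ((k:ℤ) - (j:ℤ) : ℤ) = 0 then ((2*π:ℝ):ℂ) else 0) := by
    intro k
    simp_rw [← mul_assoc]
    rw [MeasureTheory.integral_const_mul, integral_exp_Ioc]
  simp_rw [hint]
  rw [tsum_eq_single j ?other]
  · rw [sub_self, if_pos rfl, ← two_mul]
  case other =>
    intro k hk
    have : ¬ ((k:ℤ) - (j:ℤ) = 0) := by
      rw [sub_eq_zero]
      exact_mod_cast hk
    rw [if_neg this, mul_zero]

lemma parseval :
    ∫ θ in Set.Ioc (0:ℝ) (2*π), ‖Gf c r θ‖^2 = 2*π * ∑' k, ‖c k‖^2 * r^(2*k) := by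
  have hA0 : 0 ≤ A := le_trans (norm_nonneg _) (hA 0)
  have hpoint : ∀ θ : ℝ, ((‖Gf c r θ‖^2 : ℝ) : ℂ)
      = ∑' j, (starRingEnd ℂ) (c j) * ((starRingEnd ℂ) (zf r θ)^j * Gf c r θ) := by
    intro θ
    have hconj : (starRingEnd ℂ) (Gf c r θ)
        = ∑' j, (starRingEnd ℂ) (c j) * ((starRingEnd ℂ) (zf r θ))^j := by
      rw [Gf, starRingEnd_apply, tsum_star]
      congr 1; funext k
      simp only [star_mul', star_pow, starRingEnd_apply]
    calc ((‖Gf c r θ‖^2 : ℝ) : ℂ)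
        = (starRingEnd ℂ) (Gf c r θ) * Gf c r θ := (conj_mul_self _).symm
      _ = ∑' j, (starRingEnd ℂ) (c j) * ((starRingEnd ℂ) (zf r θ)^j * Gf c r θ) := by
          rw [hconj, ← tsum_mul_right]
          simp [mul_assoc]
  have hswap : ∫ θ in Set.Ioc (0:ℝ) (2*π),
      (∑' j, (starRingEnd ℂ) (c j) * ((starRingEnd ℂ) (zf r θ)^j * Gf c r θ))
      = ∑' j, ∫ θ in Set.Ioc (0:ℝ) (2*π),
        (starRingEnd ℂ) (c j) * ((starRingEnd ℂ) (zf r θ)^j * Gf c r θ) := by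
    apply swap_tsum_integral _ ?cont (fun j => (A * (A * (1-r)⁻¹)) * r^j) ?bnd
      (((summable_geometric_of_lt_one h0 h1)).mul_left _)
    case cont =>
      intro j
      apply continuous_const.mul
      apply Continuous.mul _ (Gf_cont hA h0 h1)
      exact (Complex.continuous_conj.comp (continuous_const.mul
        (Complex.continuous_exp.comp (Complex.continuous_ofReal.mul continuous_const)))).pow j
    case bnd =>
      intro j θ
      rw [norm_mul, norm_mul, norm_pow, RCLike.norm_conj, RCLike.norm_conj, norm_zf h0]
      calc ‖c j‖ * (r^j * ‖Gf c r θ‖) ≤ A * (r^j * (A * (1-r)⁻¹)) := by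
            apply mul_le_mul (hA j) _ (by positivity) hA0
            exact mul_le_mul_of_nonneg_left (Gf_bound hA h0 h1 θ) (by positivity)
        _ = (A * (A * (1-r)⁻¹)) * r^j := by ring
  have hterm : ∀ j : ℕ, (∫ θ in Set.Ioc (0:ℝ) (2*π),
      (starRingEnd ℂ) (c j) * ((starRingEnd ℂ) (zf r θ)^j * Gf c r θ))
      = ((‖c j‖^2 * r^(2*j) * (2*π) : ℝ) : ℂ) := by
    intro j
    rw [MeasureTheory.integral_const_mul, fourier_coeff hA h0 h1 j]
    calc (starRingEnd ℂ) (c j) * (c j * (r:ℂ)^(2*j) * ((2*π:ℝ):ℂ))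
        = ((starRingEnd ℂ) (c j) * c j) * ((r:ℂ)^(2*j) * ((2*π:ℝ):ℂ)) := by ring
      _ = ((‖c j‖^2 * r^(2*j) * (2*π) : ℝ) : ℂ) := by
          rw [conj_mul_self]
          push_cast
          ring
  have main : ((∫ θ in Set.Ioc (0:ℝ) (2*π), ‖Gf c r θ‖^2 : ℝ) : ℂ)
      = ((2*π * ∑' k, ‖c k‖^2 * r^(2*k) : ℝ) : ℂ) := by
    have cast1 : ∫ θ in Set.Ioc (0:ℝ) (2*π), ((‖Gf c r θ‖^2 : ℝ) : ℂ)
        = ((∫ θ in Set.Ioc (0:ℝ) (2*π), ‖Gf c r θ‖^2 : ℝ) : ℂ) := integral_ofReal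
    rw [← cast1]
    calc ∫ θ in Set.Ioc (0:ℝ) (2*π), ((‖Gf c r θ‖^2 : ℝ):ℂ)
        = ∫ θ in Set.Ioc (0:ℝ) (2*π),
            (∑' j, (starRingEnd ℂ) (c j) * ((starRingEnd ℂ) (zf r θ)^j * Gf c r θ)) := by
          apply setIntegral_congr_fun measurableSet_Ioc
          intro θ _
          exact hpoint θ
      _ = ∑' j, ∫ θ in Set.Ioc (0:ℝ) (2*π),
            (starRingEnd ℂ) (c j) * ((starRingEnd ℂ) (zf r θ)^j * Gf c r θ) := hswap
      _ = ∑' j, ((‖c j‖^2 * r^(2*j) * (2*π) : ℝ) : ℂ) := by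
          congr 1; funext j; exact hterm j
      _ = ((2*π * ∑' k, ‖c k‖^2 * r^(2*k) : ℝ) : ℂ) := by
          rw [← Complex.ofReal_tsum]
          norm_cast
          rw [tsum_mul_right]
          ring
  exact_mod_cast main


end

lemma coeff_le (f : H2) (k : ℕ) : ‖f k‖ ≤ ‖f‖ :=
  lp.norm_apply_le_norm (by norm_num) f k

lemma summable_sq (f : H2) : Summable (fun k => ‖f k‖^2) := by
  have h := Memℓp.summable (p := 2) (by norm_num) (lp.memℓp f)
  have e : ∀ x : ℝ, 0 ≤ x → x ^ (2:ℝ≥0∞).toReal = x^2 := by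
    intro x hx
    rw [show (2:ℝ≥0∞).toReal = ((2:ℕ):ℝ) by norm_num, Real.rpow_natCast]
  refine h.congr (fun k => ?_)
  exact e _ (norm_nonneg _)

lemma norm_sq_eq (f : H2) : ‖f‖^2 = ∑' k, ‖f k‖^2 := by
  have h := lp.norm_rpow_eq_tsum (p := 2) (by norm_num) f
  have e : ∀ x : ℝ, 0 ≤ x → x ^ (2:ℝ≥0∞).toReal = x^2 := by
    intro x hx
    rw [show (2:ℝ≥0∞).toReal = ((2:ℕ):ℝ) by norm_num, Real.rpow_natCast]
  rw [← e _ (norm_nonneg f), h]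
  congr 1; funext k
  exact e _ (norm_nonneg _)

lemma eval_zf (f : H2) (r θ : ℝ) : H2.eval f (zf r θ) = Gf (⇑f) r θ := rfl

lemma zf_mem (r : ℝ) (h0 : 0 ≤ r) (h1 : r < 1) (θ : ℝ) : zf r θ ∈ unitDisk := by
  rw [unitDisk, mem_ball_zero_iff, norm_zf h0]
  exact h1

/-- The key multiplier inequality. -/
lemma norm_le_of_eval_le (g h : H2) (M : ℝ) (hM : 0 ≤ M)
    (hle : ∀ z ∈ unitDisk, ‖H2.eval g z‖ ≤ M * ‖H2.eval h z‖) : ‖g‖ ≤ M * ‖h‖ := by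
  have hAg : ∀ k, ‖g k‖ ≤ ‖g‖ := coeff_le g
  have hAh : ∀ k, ‖h k‖ ≤ ‖h‖ := coeff_le h
  have key : ∀ r : ℝ, 0 ≤ r → r < 1 →
      ∑' k, ‖g k‖^2 * r^(2*k) ≤ M^2 * ‖h‖^2 := by
    intro r h0 h1
    have pg := parseval hAg h0 h1
    have ph := parseval hAh h0 h1
    have imono : ∫ θ in Set.Ioc (0:ℝ) (2*π), ‖Gf (⇑g) r θ‖^2
        ≤ ∫ θ in Set.Ioc (0:ℝ) (2*π), M^2 * ‖Gf (⇑h) r θ‖^2 := by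
      refine setIntegral_mono_on ?_ ?_ measurableSet_Ioc ?_
      · apply Continuous.integrableOn_Ioc
        exact ((Gf_cont hAg h0 h1).norm.pow 2)
      · apply Continuous.integrableOn_Ioc
        exact (continuous_const.mul ((Gf_cont hAh h0 h1).norm.pow 2))
      · intro θ _
        rw [← eval_zf, ← eval_zf]
        have := hle (zf r θ) (zf_mem r h0 h1 θ)
        calc ‖H2.eval g (zf r θ)‖^2 ≤ (M * ‖H2.eval h (zf r θ)‖)^2 :=
              pow_le_pow_left₀ (norm_nonneg _) this 2
          _ = M^2 * ‖H2.eval h (zf r θ)‖^2 := by ring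
    rw [pg, MeasureTheory.integral_const_mul, ph] at imono
    have h2π : (0:ℝ) < 2*π := by have := Real.pi_pos; linarith
    have step1 : ∑' k, ‖g k‖^2 * r^(2*k) ≤ M^2 * ∑' k, ‖h k‖^2 * r^(2*k) := by
      nlinarith [imono]
    refine step1.trans ?_
    apply mul_le_mul_of_nonneg_left _ (sq_nonneg M)
    rw [norm_sq_eq h]
    refine Summable.tsum_le_tsum (fun k => ?_) ?_ (summable_sq h)
    · calc ‖h k‖^2 * r^(2*k) ≤ ‖h k‖^2 * 1 := by
            apply mul_le_mul_of_nonneg_left _ (sq_nonneg _)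
            exact pow_le_one₀ h0 (le_of_lt h1)
        _ = ‖h k‖^2 := mul_one _
    · refine Summable.of_nonneg_of_le (fun k => by positivity) (fun k => ?_) (summable_sq h)
      calc ‖h k‖^2 * r^(2*k) ≤ ‖h k‖^2 * 1 := by
            apply mul_le_mul_of_nonneg_left _ (sq_nonneg _)
            exact pow_le_one₀ h0 (le_of_lt h1)
        _ = ‖h k‖^2 := mul_one _
  -- partial sums
  have hpartial : ∀ s : Finset ℕ, ∑ k ∈ s, ‖g k‖^2 ≤ M^2 * ‖h‖^2 := by
    intro s
    set rr : ℕ → ℝ := fun i => 1 - 1/(i+1) with hrr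
    have hrr0 : ∀ i, 0 ≤ rr i := by
      intro i
      have : 1/((i:ℝ)+1) ≤ 1 := by
        rw [div_le_one (by positivity)]
        simp
      simp only [hrr]
      linarith
    have hrr1 : ∀ i, rr i < 1 := by
      intro i
      have : 0 < 1/((i:ℝ)+1) := by positivity
      simp only [hrr]
      linarith
    have hrrlim : Tendsto rr atTop (𝓝 1) := by
      have : Tendsto (fun i : ℕ => 1/((i:ℝ)+1)) atTop (𝓝 0) :=
        tendsto_one_div_add_atTop_nhds_zero_nat
      have h2 : Tendsto (fun i : ℕ => 1 - 1/((i:ℝ)+1)) atTop (𝓝 (1 - 0)) :=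
        tendsto_const_nhds.sub this
      simpa [hrr] using h2
    have hFi : ∀ i, ∑ k ∈ s, ‖g k‖^2 * (rr i)^(2*k) ≤ M^2 * ‖h‖^2 := by
      intro i
      refine le_trans ?_ (key (rr i) (hrr0 i) (hrr1 i))
      refine Summable.sum_le_tsum s (fun k _ => mul_nonneg (sq_nonneg _) (pow_nonneg (hrr0 i) _)) ?_
      refine Summable.of_nonneg_of_le
        (fun k => mul_nonneg (sq_nonneg _) (pow_nonneg (hrr0 i) _)) (fun k => ?_) (summable_sq g)
      calc ‖g k‖^2 * (rr i)^(2*k) ≤ ‖g k‖^2 * 1 := by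
            apply mul_le_mul_of_nonneg_left _ (sq_nonneg _)
            exact pow_le_one₀ (hrr0 i) (le_of_lt (hrr1 i))
        _ = ‖g k‖^2 := mul_one _
    have hcont : Continuous (fun r : ℝ => ∑ k ∈ s, ‖g k‖^2 * r^(2*k)) := by
      apply continuous_finset_sum
      intro k _
      exact continuous_const.mul (continuous_pow _)
    have htend : Tendsto (fun i => ∑ k ∈ s, ‖g k‖^2 * (rr i)^(2*k)) atTop
        (𝓝 (∑ k ∈ s, ‖g k‖^2)) := by
      have := (hcont.tendsto 1).comp hrrlim
      simpa [Function.comp_def] using this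
    exact le_of_tendsto htend (Filter.Eventually.of_forall hFi)
  have hsq : ‖g‖^2 ≤ M^2 * ‖h‖^2 := by
    rw [norm_sq_eq g]
    exact Summable.tsum_le_of_sum_le (summable_sq g) hpartial
  have : ‖g‖^2 ≤ (M * ‖h‖)^2 := by nlinarith [hsq]
  exact le_of_pow_le_pow_left₀ (by norm_num) (by positivity) this


lemma zero_mem_disk : (0:ℂ) ∈ unitDisk := by simp [unitDisk]

lemma eval_at_zero (f : H2) : H2.eval f 0 = f 0 := by
  rw [H2.eval, tsum_eq_single 0]
  · simp
  · intro n hn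
    simp [zero_pow hn]

def e0 : H2 := lp.single 2 0 1

lemma eval_e0 (z : ℂ) : H2.eval e0 z = 1 := by
  rw [H2.eval, tsum_eq_single 0]
  · have : (e0 : ∀ n, ℂ) 0 = 1 := lp.single_apply_self 2 0 1
    simp [this]
  · intro n hn
    have : (e0 : ∀ n, ℂ) n = 0 := lp.single_apply_ne 2 0 1 hn
    simp [this]

lemma norm_e0 : ‖e0‖ = 1 := by
  have := lp.norm_single (p := 2) (E := fun _ : ℕ => ℂ) (by norm_num) 0 (1:ℂ)
  simpa [e0] using this

lemma eval_pow_wco {ψ φ : ℂ → ℂ} (hmap : Set.MapsTo φ unitDisk unitDisk)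
    {W : H2 →L[ℂ] H2} (hW : IsWCO ψ φ W) :
    ∀ (n : ℕ) (f : H2) {z : ℂ}, z ∈ unitDisk →
      H2.eval ((W ^ n) f) z
        = (∏ j ∈ Finset.range n, ψ (φ^[j] z)) * H2.eval f (φ^[n] z) := by
  intro n
  induction n with
  | zero => intro f z hz; simp
  | succ n ih =>
    intro f z hz
    rw [pow_succ, ContinuousLinearMap.mul_apply, ih (W f) hz,
      hW f _ (hmap.iterate n hz), ← Function.iterate_succ_apply' φ n z,
      Finset.prod_range_succ]
    ring

instance : Nontrivial H2 := by
  refine ⟨e0, 0, fun h => ?_⟩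
  have h1 := norm_e0
  rw [h, norm_zero] at h1
  norm_num at h1

/-- Gelfand's formula, real-valued version. -/
lemma gelfand_real (T : H2 →L[ℂ] H2) :
    Tendsto (fun n : ℕ => ‖T^n‖ ^ (1/(n:ℝ))) atTop (𝓝 ((spectralRadius ℂ T).toReal)) := by
  have h := spectrum.pow_nnnorm_pow_one_div_tendsto_nhds_spectralRadius T
  have hfin : spectralRadius ℂ T ≠ ⊤ :=
    ne_top_of_le_ne_top ENNReal.coe_ne_top (spectrum.spectralRadius_le_nnnorm (𝕜 := ℂ) T)
  have h2 := (ENNReal.tendsto_toReal hfin).comp h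
  refine h2.congr (fun n => ?_)
  show (((‖T^n‖₊ : ℝ≥0∞)) ^ (1/(n:ℝ))).toReal = ‖T^n‖ ^ (1/(n:ℝ))
  rw [← ENNReal.toReal_rpow, ENNReal.coe_toReal, coe_nnnorm]


end St12

end St12Aux

set_option maxHeartbeats 1000000
set_option synthInstance.maxHeartbeats 1000000

open St12 in
/-- If `φ` is UCI (its iterates converge to the Denjoy–Wolff point
uniformly on all of 𝔻) with Denjoy–Wolff point `a ∈ ∂𝔻`, `ψ ∈ H^∞` is continuous at `a`,
and `ψ(a) ≠ 0`, then `ρ(W_{ψ,φ}) = |ψ(a)|·ρ(C_φ)`. -/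

theorem statement12 (φ ψ : ℂ → ℂ) (a : ℂ)
    (hφ : IsSelfMapOfDisk φ) (ha : IsDenjoyWolff φ a) (haB : ‖a‖ = 1)
    (hUCI : TendstoUniformlyOn (fun n => φ^[n]) (fun _ => a) atTop unitDisk)
    (hψ : MemHinf ψ) (hψc : ContinuousWithinAt ψ (insert a unitDisk) a)
    (hψa : ψ a ≠ 0)
    (C : H2 →L[ℂ] H2) (hC : IsCO φ C)
    (W : H2 →L[ℂ] H2) (hW : IsWCO ψ φ W) :
    spectralRadius ℂ W = (‖ψ a‖₊ : ℝ≥0∞) * spectralRadius ℂ C := by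
  classical
  have hmap : Set.MapsTo φ unitDisk unitDisk := hφ.2
  set b : ℝ := ‖ψ a‖ with hbdef
  have hb : 0 < b := norm_pos_iff.mpr hψa
  -- bound for ψ on the disk
  obtain ⟨S, hSub⟩ := hψ.2
  have hS : ∀ z ∈ unitDisk, ‖ψ z‖ ≤ S := fun z hz => hSub ⟨z, hz, rfl⟩
  -- composition operator power evaluation
  have hC1 : IsWCO (fun _ => (1:ℂ)) φ C := fun f z hz => by rw [hC f z hz, one_mul]
  have hCpow : ∀ (n : ℕ) (f : H2) {z : ℂ}, z ∈ unitDisk →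
      H2.eval ((C ^ n) f) z = H2.eval f (φ^[n] z) := by
    intro n f z hz
    rw [eval_pow_wco hmap hC1 n f hz]
    simp
  -- norms of powers of C are at least 1
  have hCn1 : ∀ n : ℕ, 1 ≤ ‖C^n‖ := by
    intro n
    calc (1:ℝ) = ‖H2.eval ((C^n) e0) 0‖ := by
          rw [hCpow n e0 zero_mem_disk, eval_e0]; norm_num
      _ = ‖((C^n) e0 : ∀ k, ℂ) 0‖ := by rw [eval_at_zero]
      _ ≤ ‖(C^n) e0‖ := coeff_le _ 0
      _ ≤ ‖C^n‖ * ‖e0‖ := ContinuousLinearMap.le_opNorm _ _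
      _ = ‖C^n‖ := by rw [norm_e0, mul_one]
  -- Gelfand limits
  set rc : ℝ := (spectralRadius ℂ C).toReal with hrcdef
  set rW : ℝ := (spectralRadius ℂ W).toReal with hrWdef
  have htC := gelfand_real C
  have htW := gelfand_real W
  have hrc1 : 1 ≤ rc := by
    refine ge_of_tendsto htC (eventually_atTop.mpr ⟨1, fun n hn => ?_⟩)
    have hnne : (0:ℝ) < (n:ℝ) := by exact_mod_cast hn
    exact Real.one_le_rpow (hCn1 n) (by positivity)
  have hrc0 : 0 < rc := lt_of_lt_of_le one_pos hrc1
  -- the main epsilon block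
  have block : ∀ ε : ℝ, 0 < ε → ε < b → (b - ε) * rc ≤ rW ∧ rW ≤ (b + ε) * rc := by
    intro ε hε0 hεb
    have hbε : 0 < b - ε := by linarith
    have hbε' : 0 < b + ε := by linarith
    -- find δ and N
    obtain ⟨δ, hδ0, hδ⟩ := Metric.continuousWithinAt_iff.mp hψc ε hε0
    have hU := Metric.tendstoUniformlyOn_iff.mp hUCI δ hδ0
    obtain ⟨N, hN⟩ := eventually_atTop.mp hU
    have hnear : ∀ n, N ≤ n → ∀ z ∈ unitDisk, ‖ψ (φ^[n] z) - ψ a‖ < ε := by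
      intro n hn z hz
      have h1 := hN n hn z hz
      have h2 : φ^[n] z ∈ insert a unitDisk := mem_insert_of_mem _ (hmap.iterate n hz)
      have h3 := hδ h2 (by rw [dist_comm] at h1; exact h1)
      rwa [dist_eq_norm] at h3
    have hup : ∀ n, N ≤ n → ∀ z ∈ unitDisk, ‖ψ (φ^[n] z)‖ ≤ b + ε := by
      intro n hn z hz
      have h1 := hnear n hn z hz
      have h2 := norm_sub_norm_le (ψ (φ^[n] z)) (ψ a)
      rw [← hbdef] at h2
      linarith
    have hlo : ∀ n, N ≤ n → ∀ z ∈ unitDisk, b - ε ≤ ‖ψ (φ^[n] z)‖ := by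
      intro n hn z hz
      have h1 := hnear n hn z hz
      have h2 := norm_sub_norm_le (ψ a) (ψ (φ^[n] z))
      rw [norm_sub_rev] at h2
      rw [← hbdef] at h2
      linarith
    have hS0 : 0 < S := lt_of_lt_of_le hbε
      (le_trans (hlo N le_rfl 0 zero_mem_disk) (hS _ (hmap.iterate N zero_mem_disk)))
    set D : ℝ := S^N * ((b+ε)^N)⁻¹ with hDdef
    have hD0 : 0 < D := by positivity
    -- product upper bound
    have hprod_up : ∀ n, N ≤ n → ∀ z ∈ unitDisk,
        ∏ j ∈ Finset.range n, ‖ψ (φ^[j] z)‖ ≤ D * (b+ε)^n := by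
      intro n hn z hz
      have split : ∏ j ∈ Finset.range n, ‖ψ (φ^[j] z)‖
          = (∏ j ∈ Finset.range N, ‖ψ (φ^[j] z)‖)
            * ∏ j ∈ Finset.Ico N n, ‖ψ (φ^[j] z)‖ :=
        (Finset.prod_range_mul_prod_Ico _ hn).symm
      have h1 : ∏ j ∈ Finset.range N, ‖ψ (φ^[j] z)‖ ≤ S^N := by
        calc ∏ j ∈ Finset.range N, ‖ψ (φ^[j] z)‖ ≤ ∏ _j ∈ Finset.range N, S :=
              Finset.prod_le_prod (fun j _ => norm_nonneg _)
                (fun j _ => hS _ (hmap.iterate j hz))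
          _ = S^N := by rw [Finset.prod_const, Finset.card_range]
      have h2 : ∏ j ∈ Finset.Ico N n, ‖ψ (φ^[j] z)‖ ≤ (b+ε)^(n-N) := by
        calc ∏ j ∈ Finset.Ico N n, ‖ψ (φ^[j] z)‖ ≤ ∏ _j ∈ Finset.Ico N n, (b+ε) :=
              Finset.prod_le_prod (fun j _ => norm_nonneg _)
                (fun j hj => hup j (Finset.mem_Ico.mp hj).1 z hz)
          _ = (b+ε)^(n-N) := by rw [Finset.prod_const, Nat.card_Ico]
      have h3 : S^N * (b+ε)^(n-N) = D * (b+ε)^n := by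
        have : (b+ε)^n = (b+ε)^N * (b+ε)^(n-N) := by
          rw [← pow_add, Nat.add_sub_cancel' hn]
        rw [this, hDdef]
        field_simp
      rw [split, ← h3]
      apply mul_le_mul h1 h2 (Finset.prod_nonneg (fun j _ => norm_nonneg _)) (by positivity)
    -- product lower bound
    have hprod_lo : ∀ m, ∀ z ∈ unitDisk,
        (b-ε)^m ≤ ∏ j ∈ Finset.range m, ‖ψ (φ^[j + N] z)‖ := by
      intro m z hz
      calc (b-ε)^m = ∏ _j ∈ Finset.range m, (b-ε) := by
            rw [Finset.prod_const, Finset.card_range]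
        _ ≤ ∏ j ∈ Finset.range m, ‖ψ (φ^[j + N] z)‖ :=
            Finset.prod_le_prod (fun j _ => le_of_lt hbε)
              (fun j _ => hlo (j+N) (Nat.le_add_left N j) z hz)
    -- operator norm upper bound for W^n
    have hWop : ∀ n, N ≤ n → ‖W^n‖ ≤ (D * (b+ε)^n) * ‖C^n‖ := by
      intro n hn
      refine ContinuousLinearMap.opNorm_le_bound _ (by positivity) (fun f => ?_)
      have key : ‖(W^n) f‖ ≤ (D*(b+ε)^n) * ‖(C^n) f‖ := by
        apply norm_le_of_eval_le _ _ _ (by positivity)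
        intro z hz
        rw [eval_pow_wco hmap hW n f hz, hCpow n f hz, norm_mul]
        apply mul_le_mul_of_nonneg_right _ (norm_nonneg _)
        rw [norm_prod]
        exact hprod_up n hn z hz
      calc ‖(W^n) f‖ ≤ (D*(b+ε)^n) * ‖(C^n) f‖ := key
        _ ≤ (D*(b+ε)^n) * (‖C^n‖ * ‖f‖) :=
            mul_le_mul_of_nonneg_left (ContinuousLinearMap.le_opNorm _ f) (by positivity)
        _ = (D*(b+ε)^n) * ‖C^n‖ * ‖f‖ := by ring
    -- operator norm lower bound chain for C^(m+N)
    have hCop : ∀ m : ℕ, ‖C^(m+N)‖ ≤ ((b-ε)^m)⁻¹ * (‖C^N‖ * ‖W^m‖) := by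
      intro m
      refine ContinuousLinearMap.opNorm_le_bound _ (by positivity) (fun f => ?_)
      have key : ‖(C^(m+N)) f‖ ≤ ((b-ε)^m)⁻¹ * ‖(C^N) ((W^m) f)‖ := by
        apply norm_le_of_eval_le _ _ _ (by positivity)
        intro z hz
        have hzN : φ^[N] z ∈ unitDisk := hmap.iterate N hz
        rw [hCpow (m+N) f hz, hCpow N ((W^m) f) hz, eval_pow_wco hmap hW m f hzN,
          Function.iterate_add_apply φ m N z, norm_mul, norm_prod]
        have hpeq : ∏ j ∈ Finset.range m, ‖ψ (φ^[j] (φ^[N] z))‖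
            = ∏ j ∈ Finset.range m, ‖ψ (φ^[j + N] z)‖ := by
          apply Finset.prod_congr rfl
          intro j _
          rw [← Function.iterate_add_apply φ j N z]
        rw [hpeq]
        set X := ‖H2.eval f (φ^[m] (φ^[N] z))‖ with hX
        set P := ∏ j ∈ Finset.range m, ‖ψ (φ^[j + N] z)‖ with hP
        have hPl : (b-ε)^m ≤ P := hprod_lo m z hz
        calc X = ((b-ε)^m)⁻¹ * ((b-ε)^m * X) := by field_simp
          _ ≤ ((b-ε)^m)⁻¹ * (P * X) := by
              apply mul_le_mul_of_nonneg_left _ (by positivity)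
              exact mul_le_mul_of_nonneg_right hPl (norm_nonneg _)
      calc ‖(C^(m+N)) f‖ ≤ ((b-ε)^m)⁻¹ * ‖(C^N) ((W^m) f)‖ := key
        _ ≤ ((b-ε)^m)⁻¹ * (‖C^N‖ * (‖W^m‖ * ‖f‖)) := by
            apply mul_le_mul_of_nonneg_left _ (by positivity)
            calc ‖(C^N) ((W^m) f)‖ ≤ ‖C^N‖ * ‖(W^m) f‖ :=
                  ContinuousLinearMap.le_opNorm _ _
              _ ≤ ‖C^N‖ * (‖W^m‖ * ‖f‖) :=
                  mul_le_mul_of_nonneg_left (ContinuousLinearMap.le_opNorm _ _)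
                    (norm_nonneg _)
        _ = ((b-ε)^m)⁻¹ * (‖C^N‖ * ‖W^m‖) * ‖f‖ := by ring
    -- Claim A : rW ≤ (b+ε) * rc
    have claimA : rW ≤ (b + ε) * rc := by
      have hA : ∀ᶠ n : ℕ in atTop, ‖W^n‖ ^ (1/(n:ℝ))
          ≤ D ^ (1/(n:ℝ)) * (b+ε) * ‖C^n‖ ^ (1/(n:ℝ)) := by
        refine eventually_atTop.mpr ⟨max N 1, fun n hn => ?_⟩
        have hn1 : 1 ≤ n := le_trans (le_max_right _ _) hn
        have hnN : N ≤ n := le_trans (le_max_left _ _) hn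
        have hnne : ((n:ℝ)) ≠ 0 := by
          have : (0:ℝ) < (n:ℝ) := by exact_mod_cast hn1
          linarith
        have h := Real.rpow_le_rpow (norm_nonneg _) (hWop n hnN)
          (by positivity : (0:ℝ) ≤ 1/(n:ℝ))
        rw [Real.mul_rpow (by positivity) (norm_nonneg _),
          Real.mul_rpow (le_of_lt hD0) (by positivity),
          ← Real.rpow_natCast (b+ε) n, ← Real.rpow_mul (le_of_lt hbε'),
          mul_one_div, div_self hnne, Real.rpow_one] at h
        exact h
      have hDlim : Tendsto (fun n : ℕ => D ^ (1/(n:ℝ))) atTop (𝓝 1) := by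
        have h0 : Tendsto (fun n : ℕ => 1/(n:ℝ)) atTop (𝓝 0) :=
          tendsto_one_div_atTop_nhds_zero_nat
        have h1 : Tendsto (fun _ : ℕ => D) atTop (𝓝 D) := tendsto_const_nhds
        have h2 := h1.rpow h0 (Or.inl (ne_of_gt hD0))
        simpa using h2
      have hright : Tendsto (fun n : ℕ => D ^ (1/(n:ℝ)) * (b+ε) * ‖C^n‖ ^ (1/(n:ℝ)))
          atTop (𝓝 (1 * (b+ε) * rc)) :=
        (hDlim.mul tendsto_const_nhds).mul htC
      have := le_of_tendsto_of_tendsto htW hright hA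
      linarith [this]
    -- Claim B : (b-ε) * rc ≤ rW
    have claimB : (b - ε) * rc ≤ rW := by
      set E : ℝ := ‖C^N‖ with hEdef
      have hE1 : 1 ≤ E := hCn1 N
      have hE0 : 0 < E := lt_of_lt_of_le one_pos hE1
      have hB : ∀ᶠ m : ℕ in atTop, ‖C^(m+N)‖ ^ (1/(m:ℝ))
          ≤ E ^ (1/(m:ℝ)) * ((b-ε)⁻¹ * ‖W^m‖ ^ (1/(m:ℝ))) := by
        refine eventually_atTop.mpr ⟨1, fun m hm1 => ?_⟩
        have hm0 : (0:ℝ) < (m:ℝ) := by exact_mod_cast hm1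
        have hmne : ((m:ℝ)) ≠ 0 := ne_of_gt hm0
        have h := Real.rpow_le_rpow (norm_nonneg _) (hCop m)
          (by positivity : (0:ℝ) ≤ 1/(m:ℝ))
        rw [Real.mul_rpow (by positivity) (by positivity),
          Real.mul_rpow (le_of_lt hE0) (norm_nonneg _)] at h
        have hcol : ((((b-ε)^m)⁻¹ : ℝ)) ^ (1/(m:ℝ)) = (b-ε)⁻¹ := by
          rw [← Real.rpow_natCast (b-ε) m, ← Real.rpow_neg (le_of_lt hbε),
            ← Real.rpow_mul (le_of_lt hbε)]
          rw [show -((m:ℕ):ℝ) * (1/(m:ℝ)) = -1 by field_simp]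
          exact Real.rpow_neg_one _
        rw [hcol] at h
        calc ‖C^(m+N)‖ ^ (1/(m:ℝ))
            ≤ (b-ε)⁻¹ * (E ^ (1/(m:ℝ)) * ‖W^m‖ ^ (1/(m:ℝ))) := h
          _ = E ^ (1/(m:ℝ)) * ((b-ε)⁻¹ * ‖W^m‖ ^ (1/(m:ℝ))) := by ring
      have hleft : Tendsto (fun m : ℕ => ‖C^(m+N)‖ ^ (1/(m:ℝ))) atTop (𝓝 rc) := by
        have hcomp : Tendsto (fun m : ℕ => ‖C^(m+N)‖ ^ (1/((m+N:ℕ):ℝ))) atTop (𝓝 rc) :=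
          htC.comp (tendsto_add_atTop_nat N)
        have hexp : Tendsto (fun m : ℕ => ((m:ℝ)+(N:ℝ)) * (1/(m:ℝ))) atTop (𝓝 1) := by
          have h1 : Tendsto (fun m : ℕ => 1 + (N:ℝ) * (1/(m:ℝ))) atTop (𝓝 (1 + (N:ℝ) * 0)) :=
            tendsto_const_nhds.add (tendsto_const_nhds.mul tendsto_one_div_atTop_nhds_zero_nat)
          rw [mul_zero, add_zero] at h1
          refine Tendsto.congr' ?_ h1
          refine eventually_atTop.mpr ⟨1, fun m hm1 => ?_⟩
          have hm0 : ((m:ℝ)) ≠ 0 := by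
            have : (0:ℝ) < (m:ℝ) := by exact_mod_cast hm1
            linarith
          field_simp
        have hmix := hcomp.rpow hexp (Or.inl (ne_of_gt hrc0))
        rw [Real.rpow_one] at hmix
        refine Tendsto.congr' ?_ hmix
        refine eventually_atTop.mpr ⟨1, fun m hm1 => ?_⟩
        have hm0 : ((m:ℝ)) ≠ 0 := by
          have : (0:ℝ) < (m:ℝ) := by exact_mod_cast hm1
          linarith
        have hmN : (((m+N:ℕ)):ℝ) ≠ 0 := Nat.cast_ne_zero.mpr (by omega)
        show (‖C ^ (m+N)‖ ^ (1/((m+N:ℕ):ℝ))) ^ (((m:ℝ)+(N:ℝ)) * (1/(m:ℝ)))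
          = ‖C ^ (m+N)‖ ^ (1/(m:ℝ))
        rw [← Real.rpow_mul (norm_nonneg _)]
        congr 1
        push_cast at hmN ⊢
        field_simp
      have hElim : Tendsto (fun m : ℕ => E ^ (1/(m:ℝ))) atTop (𝓝 1) := by
        have h0 : Tendsto (fun m : ℕ => 1/(m:ℝ)) atTop (𝓝 0) :=
          tendsto_one_div_atTop_nhds_zero_nat
        have h1 : Tendsto (fun _ : ℕ => E) atTop (𝓝 E) := tendsto_const_nhds
        have h2 := h1.rpow h0 (Or.inl (ne_of_gt hE0))
        simpa using h2
      have hright : Tendsto (fun m : ℕ => E ^ (1/(m:ℝ)) * ((b-ε)⁻¹ * ‖W^m‖ ^ (1/(m:ℝ))))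
          atTop (𝓝 (1 * ((b-ε)⁻¹ * rW))) :=
        hElim.mul (tendsto_const_nhds.mul htW)
      have hfin := le_of_tendsto_of_tendsto hleft hright hB
      rw [one_mul] at hfin
      have h4 := mul_le_mul_of_nonneg_left hfin (le_of_lt hbε)
      calc (b-ε) * rc ≤ (b-ε) * ((b-ε)⁻¹ * rW) := h4
        _ = rW := by field_simp
    exact ⟨claimB, claimA⟩
  -- conclude rW = b * rc
  have hmain : rW = b * rc := by
    by_contra hne
    rcases lt_or_gt_of_ne hne with hlt | hgt
    · have hgap : 0 < b * rc - rW := by linarith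
      have hε0 : 0 < min (b/2) ((b*rc - rW)/(2*rc)) :=
        lt_min (by linarith) (div_pos hgap (by linarith))
      have hεb : min (b/2) ((b*rc - rW)/(2*rc)) < b :=
        lt_of_le_of_lt (min_le_left _ _) (by linarith)
      obtain ⟨h1, -⟩ := block _ hε0 hεb
      have h3 : min (b/2) ((b*rc - rW)/(2*rc)) ≤ (b*rc - rW)/(2*rc) := min_le_right _ _
      have h2 : min (b/2) ((b*rc - rW)/(2*rc)) * rc ≤ (b*rc - rW)/2 := by
        calc min (b/2) ((b*rc - rW)/(2*rc)) * rc ≤ ((b*rc - rW)/(2*rc)) * rc :=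
              mul_le_mul_of_nonneg_right h3 (le_of_lt hrc0)
          _ = (b*rc - rW)/2 := by field_simp
      nlinarith [h1]
    · have hgap : 0 < rW - b * rc := by linarith
      have hε0 : 0 < min (b/2) ((rW - b*rc)/(2*rc)) :=
        lt_min (by linarith) (div_pos hgap (by linarith))
      have hεb : min (b/2) ((rW - b*rc)/(2*rc)) < b :=
        lt_of_le_of_lt (min_le_left _ _) (by linarith)
      obtain ⟨-, h1⟩ := block _ hε0 hεb
      have h3 : min (b/2) ((rW - b*rc)/(2*rc)) ≤ (rW - b*rc)/(2*rc) := min_le_right _ _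
      have h2 : min (b/2) ((rW - b*rc)/(2*rc)) * rc ≤ (rW - b*rc)/2 := by
        calc min (b/2) ((rW - b*rc)/(2*rc)) * rc ≤ ((rW - b*rc)/(2*rc)) * rc :=
              mul_le_mul_of_nonneg_right h3 (le_of_lt hrc0)
          _ = (rW - b*rc)/2 := by field_simp
      nlinarith [h1]
  -- convert back to ℝ≥0∞
  have hfinC : spectralRadius ℂ C ≠ ⊤ :=
    ne_top_of_le_ne_top ENNReal.coe_ne_top (spectrum.spectralRadius_le_nnnorm (𝕜 := ℂ) C)
  have hfinW : spectralRadius ℂ W ≠ ⊤ :=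
    ne_top_of_le_ne_top ENNReal.coe_ne_top (spectrum.spectralRadius_le_nnnorm (𝕜 := ℂ) W)
  have hfinR : (‖ψ a‖₊ : ℝ≥0∞) * spectralRadius ℂ C ≠ ⊤ :=
    ENNReal.mul_ne_top ENNReal.coe_ne_top hfinC
  refine (ENNReal.toReal_eq_toReal_iff' hfinW hfinR).mp ?_
  rw [ENNReal.toReal_mul, ENNReal.coe_toReal, coe_nnnorm]
  rw [hrWdef, hrcdef, hbdef] at hmain
  exact hmain
end
end

section
/- Suppose φ is an analytic self-map of the open unit disk 𝔻 with Denjoy-Wolff point a ∈ ∂𝔻, ψ ∈ H^∞ is continuous at a with ‖ψ‖_∞ = |ψ(a)|, and ρ(W_{ψ,φ}) = |ψ(a)|·ρ(C_φ). If C_φ is normaloid, then W_{ψ,φ} is normaloid. -/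
open Complex Metric Filter Set MeasureTheory
open scoped ENNReal NNReal Topology InnerProductSpace Real

noncomputable section

lemma aux_summable_norm (f : H2) {r : ℝ} (hr0 : 0 ≤ r) (hr : r < 1) :
    Summable (fun n : ℕ => ‖f n‖ * r ^ n) := by
  apply Summable.of_nonneg_of_le
    (fun n => mul_nonneg (norm_nonneg _) (pow_nonneg hr0 n))
    (fun n => mul_le_mul_of_nonneg_right (lp.norm_apply_le_norm (by norm_num) f n)
      (pow_nonneg hr0 n))
  exact (summable_geometric_of_lt_one hr0 hr).mul_left _

lemma aux_circle_norm {r : ℝ} (hr0 : 0 ≤ r) (θ : ℝ) :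
    ‖(r : ℂ) * Complex.exp (θ * Complex.I)‖ = r := by
  rw [norm_mul, Complex.norm_real, Complex.norm_exp_ofReal_mul_I, Real.norm_eq_abs,
    _root_.abs_of_nonneg hr0, mul_one]

lemma aux_cont (f : H2) {r : ℝ} (hr0 : 0 ≤ r) (hr : r < 1) :
    Continuous (fun θ : ℝ => H2.eval f ((r : ℂ) * Complex.exp (θ * Complex.I))) := by
  unfold H2.eval
  apply continuous_tsum (u := fun n => ‖f n‖ * r ^ n)
  · intro n
    fun_prop
  · exact aux_summable_norm f hr0 hr
  · intro n θ
    rw [norm_mul, norm_pow, aux_circle_norm hr0]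

instance : Nontrivial H2 := by
  refine ⟨lp.single 2 0 (1:ℂ), 0, fun hcon => one_ne_zero (α := ℂ) ?_⟩
  have h1 : (lp.single 2 0 (1:ℂ) : ∀ _ : ℕ, ℂ) 0 = 1 := lp.single_apply_self 2 0 1
  rw [hcon] at h1
  simpa using h1.symm

set_option synthInstance.maxHeartbeats 1000000 in
lemma aux_spec_le (T : H2 →L[ℂ] H2) : spectralRadius ℂ T ≤ (‖T‖₊ : ℝ≥0∞) :=
  spectrum.spectralRadius_le_nnnorm T

lemma aux_prod_eq (f : H2) {r : ℝ} (hr0 : 0 ≤ r) (hr : r < 1) (θ : ℝ) :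
    H2.eval f ((r:ℂ) * Complex.exp (θ * Complex.I))
        * (starRingEnd ℂ) (H2.eval f ((r:ℂ) * Complex.exp (θ * Complex.I)))
      = ∑' p : ℕ × ℕ, (f p.1 * (starRingEnd ℂ) (f p.2) * (r:ℂ)^(p.1+p.2))
          * Complex.exp ((((p.1:ℂ) - p.2) * Complex.I) * θ) := by
  set w : ℂ := (r:ℂ) * Complex.exp (θ * Complex.I) with hwdef
  have hw : ‖w‖ = r := aux_circle_norm hr0 θ
  have hnf : Summable (fun n : ℕ => ‖f n * w ^ n‖) := by
    refine (aux_summable_norm f hr0 hr).congr fun n => ?_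
    rw [norm_mul, norm_pow, hw]
  have hng : Summable (fun m : ℕ => ‖(starRingEnd ℂ) (f m) * ((starRingEnd ℂ) w) ^ m‖) := by
    refine (aux_summable_norm f hr0 hr).congr fun m => ?_
    rw [norm_mul, norm_pow, RCLike.norm_conj, RCLike.norm_conj, hw]
  have hconj : (starRingEnd ℂ) (H2.eval f w)
      = ∑' m, (starRingEnd ℂ) (f m) * ((starRingEnd ℂ) w) ^ m := by
    rw [H2.eval, starRingEnd_apply, tsum_star]
    exact tsum_congr fun m => by simp only [starRingEnd_apply, star_mul', star_pow, mul_comm]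
  rw [hconj, H2.eval, tsum_mul_tsum_of_summable_norm hnf hng]
  refine tsum_congr fun p => ?_
  obtain ⟨n, m⟩ := p
  have hwn : ∀ k : ℕ, w ^ k = (r:ℂ)^k * Complex.exp ((k:ℂ) * (θ * Complex.I)) := by
    intro k; rw [hwdef, mul_pow, ← Complex.exp_nat_mul]
  have hcw : (starRingEnd ℂ) w = (r:ℂ) * Complex.exp (-(θ * Complex.I)) := by
    rw [hwdef, map_mul, Complex.conj_ofReal, ← Complex.exp_conj, map_mul, Complex.conj_ofReal,
      Complex.conj_I, mul_neg]
  have hcwn : ∀ k : ℕ, ((starRingEnd ℂ) w) ^ k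
      = (r:ℂ)^k * Complex.exp (-((k:ℂ) * (θ * Complex.I))) := by
    intro k; rw [hcw, mul_pow, ← Complex.exp_nat_mul]; ring_nf
  have hE : Complex.exp ((n:ℂ) * (θ * Complex.I)) * Complex.exp (-((m:ℂ) * (θ * Complex.I)))
      = Complex.exp ((((n:ℂ) - m) * Complex.I) * θ) := by
    rw [← Complex.exp_add]; ring_nf
  calc (f n * w ^ n) * ((starRingEnd ℂ) (f m) * ((starRingEnd ℂ) w) ^ m)
      = (f n * (starRingEnd ℂ) (f m) * ((r:ℂ)^n * (r:ℂ)^m))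
          * (Complex.exp ((n:ℂ) * (θ * Complex.I))
             * Complex.exp (-((m:ℂ) * (θ * Complex.I)))) := by
        rw [hwn, hcwn]; ring
    _ = (f n * (starRingEnd ℂ) (f m) * (r:ℂ)^(n+m))
          * Complex.exp ((((n:ℂ) - m) * Complex.I) * θ) := by rw [hE, ← pow_add]

lemma aux_orth (n m : ℕ) :
    ∫ θ in Set.Ioc (0:ℝ) (2*π), Complex.exp ((((n:ℂ) - m) * Complex.I) * θ)
      = if n = m then (2*π : ℂ) else 0 := by
  rw [← intervalIntegral.integral_of_le (by positivity)]
  by_cases h : n = m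
  · subst h
    simp [intervalIntegral.integral_const]
  · have hc : ((n:ℂ) - m) * Complex.I ≠ 0 := by
      refine mul_ne_zero (sub_ne_zero_of_ne ?_) Complex.I_ne_zero
      exact_mod_cast h
    rw [integral_exp_mul_complex hc]
    have h2 : Complex.exp (((n:ℂ) - m) * Complex.I * ((2*π : ℝ) : ℂ)) = 1 := by
      have h1 : ((n:ℂ) - m) * Complex.I * ((2*π : ℝ) : ℂ)
          = (((n : ℤ) - (m : ℤ) : ℤ) : ℂ) * (2*π*Complex.I) := by push_cast; ring
      rw [h1, Complex.exp_int_mul_two_pi_mul_I]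
    simp only [Complex.ofReal_zero, mul_zero, Complex.exp_zero, h2, if_neg h]
    simp

lemma aux_exp_norm (n m : ℕ) (θ : ℝ) :
    ‖Complex.exp ((((n:ℂ) - m) * Complex.I) * θ)‖ = 1 := by
  have h1 : (((n:ℂ) - m) * Complex.I) * θ = ((((n:ℝ) - m) * θ : ℝ) : ℂ) * Complex.I := by
    push_cast; ring
  rw [h1, Complex.norm_exp_ofReal_mul_I]

lemma aux_parseval (f : H2) {r : ℝ} (hr0 : 0 ≤ r) (hr : r < 1) :
    ∫ θ in Set.Ioc (0:ℝ) (2*π), ‖H2.eval f ((r:ℂ) * Complex.exp (θ * Complex.I))‖^2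
      = 2*π * ∑' n, ‖f n‖^2 * r^(2*n) := by
  have hsn := aux_summable_norm f hr0 hr
  set T : ℕ × ℕ → ℝ → ℂ := fun p θ =>
    (f p.1 * (starRingEnd ℂ) (f p.2) * (r:ℂ)^(p.1+p.2))
      * Complex.exp ((((p.1:ℂ) - p.2) * Complex.I) * θ) with hT
  have hTnorm : ∀ p : ℕ × ℕ, ∀ θ : ℝ,
      ‖T p θ‖ = (‖f p.1‖ * r ^ p.1) * (‖f p.2‖ * r ^ p.2) := by
    intro p θ
    rw [hT]
    simp only [norm_mul, aux_exp_norm, mul_one, norm_pow, RCLike.norm_conj,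
      Complex.norm_real, Real.norm_eq_abs, _root_.abs_of_nonneg hr0, pow_add]
    ring
  have hTcont : ∀ p : ℕ × ℕ, Continuous (T p) := by
    intro p
    exact continuous_const.mul (Complex.continuous_exp.comp
      (continuous_const.mul Complex.continuous_ofReal))
  have hTint : ∀ p : ℕ × ℕ, IntegrableOn (T p) (Set.Ioc (0:ℝ) (2*π)) := by
    intro p; exact (hTcont p).integrableOn_Ioc
  have hTsum : Summable fun p : ℕ × ℕ =>
      ∫ θ in Set.Ioc (0:ℝ) (2*π), ‖T p θ‖ := by
    refine Summable.congr (((hsn.mul_of_nonneg hsn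
      (fun n => mul_nonneg (norm_nonneg _) (pow_nonneg hr0 n))
      (fun n => mul_nonneg (norm_nonneg _) (pow_nonneg hr0 n))).mul_left (2*π))) fun p => ?_
    simp only [hTnorm]
    rw [setIntegral_const, Real.volume_real_Ioc_of_le (by positivity), smul_eq_mul]
    ring_nf
  apply Complex.ofReal_injective
  calc ((∫ θ in Set.Ioc (0:ℝ) (2*π),
        ‖H2.eval f ((r:ℂ) * Complex.exp (θ * Complex.I))‖^2 : ℝ) : ℂ)
      = ∫ θ in Set.Ioc (0:ℝ) (2*π),
          ((‖H2.eval f ((r:ℂ) * Complex.exp (θ * Complex.I))‖^2 : ℝ) : ℂ) :=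
        integral_ofReal.symm
    _ = ∫ θ in Set.Ioc (0:ℝ) (2*π), ∑' p : ℕ × ℕ, T p θ := by
        refine setIntegral_congr_fun measurableSet_Ioc fun θ _ => ?_
        rw [← aux_prod_eq f hr0 hr θ, Complex.mul_conj, Complex.normSq_eq_norm_sq]
    _ = ∑' p : ℕ × ℕ, ∫ θ in Set.Ioc (0:ℝ) (2*π), T p θ :=
        (integral_tsum_of_summable_integral_norm hTint hTsum).symm
    _ = ∑' p : ℕ × ℕ, (f p.1 * (starRingEnd ℂ) (f p.2) * (r:ℂ)^(p.1+p.2))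
          * (if p.1 = p.2 then (2*π : ℂ) else 0) := by
        refine tsum_congr fun p => ?_
        rw [hT]
        rw [MeasureTheory.integral_const_mul, aux_orth]
    _ = ∑' n : ℕ, ((‖f n‖^2 * r^(2*n) * (2*π) : ℝ) : ℂ) := by
        rw [← Function.Injective.tsum_eq (g := fun n : ℕ => ((n, n) : ℕ × ℕ))
          (fun a b hab => (Prod.ext_iff.mp hab).1)]
        · refine tsum_congr fun n => ?_
          simp only [if_pos rfl, Complex.mul_conj, Complex.normSq_eq_norm_sq]
          push_cast
          ring
        · intro p hp
          rcases eq_or_ne p.1 p.2 with h | h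
          · exact ⟨p.1, by rw [Prod.ext_iff]; exact ⟨rfl, h⟩⟩
          · exact absurd (by simp [if_neg h]) hp
    _ = ((2*π * ∑' n, ‖f n‖^2 * r^(2*n) : ℝ) : ℂ) := by
        rw [← Complex.ofReal_tsum]
        norm_cast
        rw [tsum_mul_right, mul_comm]

lemma aux_mult_bound (ψ : ℂ → ℂ) (M : ℝ) (hM0 : 0 ≤ M) (hM : ∀ z ∈ unitDisk, ‖ψ z‖ ≤ M)
    (g h : H2) (hgh : ∀ z ∈ unitDisk, H2.eval h z = ψ z * H2.eval g z) :
    ‖h‖ ≤ M * ‖g‖ := by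
  have hnorm2 : ∀ x : H2, ‖x‖^2 = ∑' n, ‖x n‖^2 := by
    intro x
    have hx := lp.norm_rpow_eq_tsum (p := 2) (by norm_num) x
    have h2 : ((2 : ℝ≥0∞)).toReal = ((2:ℕ) : ℝ) := by norm_num
    rw [h2] at hx
    simpa only [Real.rpow_natCast] using hx
  have hsummable : ∀ x : H2, Summable fun n => ‖x n‖^2 := by
    intro x
    have hx := (memℓp_gen_iff (p := 2) (by norm_num)).mp (lp.memℓp x)
    have h2 : ((2 : ℝ≥0∞)).toReal = ((2:ℕ) : ℝ) := by norm_num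
    rw [h2] at hx
    simpa only [Real.rpow_natCast] using hx
  have hhr : ∀ r : ℝ, 0 ≤ r → r < 1 → Summable fun n => ‖h n‖^2 * r^(2*n) := by
    intro r hr0 hr
    refine Summable.of_nonneg_of_le (fun n => by positivity) (fun n => ?_) (hsummable h)
    calc ‖h n‖^2 * r^(2*n) ≤ ‖h n‖^2 * 1 := by
          refine mul_le_mul_of_nonneg_left (pow_le_one₀ hr0 hr.le) (by positivity)
      _ = ‖h n‖^2 := mul_one _
  have key : ∀ r : ℝ, 0 ≤ r → r < 1 → ∑' n, ‖h n‖^2 * r^(2*n) ≤ M^2 * ‖g‖^2 := by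
    intro r hr0 hr
    have hmem : ∀ θ : ℝ, ((r:ℂ) * Complex.exp (θ * Complex.I)) ∈ unitDisk := by
      intro θ
      rw [unitDisk, mem_ball_zero_iff, aux_circle_norm hr0]
      exact hr
    have hint : ∫ θ in Set.Ioc (0:ℝ) (2*Real.pi),
          ‖H2.eval h ((r:ℂ) * Complex.exp (θ * Complex.I))‖^2
        ≤ ∫ θ in Set.Ioc (0:ℝ) (2*Real.pi),
          M^2 * ‖H2.eval g ((r:ℂ) * Complex.exp (θ * Complex.I))‖^2 := by
      refine MeasureTheory.setIntegral_mono_on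
        (((aux_cont h hr0 hr).norm.pow 2).integrableOn_Ioc)
        ((continuous_const.mul ((aux_cont g hr0 hr).norm.pow 2)).integrableOn_Ioc)
        measurableSet_Ioc (fun θ _ => ?_)
      rw [hgh _ (hmem θ), norm_mul, mul_pow]
      exact mul_le_mul_of_nonneg_right
        (pow_le_pow_left₀ (norm_nonneg _) (hM _ (hmem θ)) 2) (by positivity)
    rw [aux_parseval h hr0 hr, MeasureTheory.integral_const_mul, aux_parseval g hr0 hr] at hint
    have hgle : ∑' n, ‖g n‖^2 * r^(2*n) ≤ ‖g‖^2 := by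
      rw [hnorm2 g]
      refine Summable.tsum_le_tsum (fun n => ?_) ?_ (hsummable g)
      · calc ‖g n‖^2 * r^(2*n) ≤ ‖g n‖^2 * 1 :=
              mul_le_mul_of_nonneg_left (pow_le_one₀ hr0 hr.le) (by positivity)
          _ = ‖g n‖^2 := mul_one _
      · refine Summable.of_nonneg_of_le (fun n => by positivity) (fun n => ?_) (hsummable g)
        calc ‖g n‖^2 * r^(2*n) ≤ ‖g n‖^2 * 1 :=
              mul_le_mul_of_nonneg_left (pow_le_one₀ hr0 hr.le) (by positivity)
          _ = ‖g n‖^2 := mul_one _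
    have hpi : (0:ℝ) < 2*Real.pi := by positivity
    have h1 : M^2 * (2*Real.pi * ∑' n, ‖g n‖^2 * r^(2*n)) ≤ M^2 * (2*Real.pi * ‖g‖^2) :=
      mul_le_mul_of_nonneg_left (mul_le_mul_of_nonneg_left hgle hpi.le) (sq_nonneg M)
    have h2 : 2*Real.pi * (∑' n, ‖h n‖^2 * r^(2*n)) ≤ 2*Real.pi * (M^2 * ‖g‖^2) := by
      calc 2*Real.pi * (∑' n, ‖h n‖^2 * r^(2*n)) ≤ M^2 * (2*Real.pi * ∑' n, ‖g n‖^2 * r^(2*n)) :=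
            hint
        _ ≤ M^2 * (2*Real.pi * ‖g‖^2) := h1
        _ = 2*Real.pi * (M^2 * ‖g‖^2) := by ring
    exact le_of_mul_le_mul_left h2 hpi
  have hfin : ∀ s : Finset ℕ, ∑ n ∈ s, ‖h n‖^2 ≤ M^2 * ‖g‖^2 := by
    intro s
    have hcont : Continuous (fun r : ℝ => ∑ n ∈ s, ‖h n‖^2 * r^(2*n)) := by
      refine continuous_finset_sum s fun n _ => ?_
      exact continuous_const.mul (continuous_pow _)
    have htend : Tendsto (fun r : ℝ => ∑ n ∈ s, ‖h n‖^2 * r^(2*n)) (𝓝[<] (1:ℝ))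
        (𝓝 (∑ n ∈ s, ‖h n‖^2)) := by
      have h1 := hcont.tendsto (1:ℝ)
      have h2 := h1.mono_left (nhdsWithin_le_nhds (s := Set.Iio (1:ℝ)))
      simpa using h2
    refine le_of_tendsto htend ?_
    filter_upwards [Ico_mem_nhdsLT (by norm_num : (0:ℝ) < 1)] with r hr
    exact le_trans (Summable.sum_le_tsum s (fun n _ => mul_nonneg (sq_nonneg _) (pow_nonneg hr.1 _)) (hhr r hr.1 hr.2))
      (key r hr.1 hr.2)
  have htsum : ∑' n, ‖h n‖^2 ≤ M^2 * ‖g‖^2 := Summable.tsum_le_of_sum_le (hsummable h) hfin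
  have hsq : ‖h‖^2 ≤ (M * ‖g‖)^2 := by
    rw [hnorm2 h, mul_pow]
    exact htsum
  exact (pow_le_pow_iff_left₀ (norm_nonneg h) (by positivity) two_ne_zero).mp hsq

/-- Suppose `φ` is an analytic self-map of the disk with Denjoy–Wolff
point `a ∈ ∂𝔻`, `ψ ∈ H^∞` is continuous at `a` with `‖ψ‖_∞ = |ψ(a)|`, and
`ρ(W_{ψ,φ}) = |ψ(a)|·ρ(C_φ)`. If `C_φ` is normaloid, then `W_{ψ,φ}` is normaloid. -/
theorem statement13 (φ ψ : ℂ → ℂ) (a : ℂ)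
    (hφ : IsSelfMapOfDisk φ) (ha : IsDenjoyWolff φ a) (haB : ‖a‖ = 1)
    (hψ : MemHinf ψ) (hψc : ContinuousWithinAt ψ (insert a unitDisk) a)
    (hψa : hinfNorm ψ = ‖ψ a‖)
    (C : H2 →L[ℂ] H2) (hC : IsCO φ C)
    (W : H2 →L[ℂ] H2) (hW : IsWCO ψ φ W)
    (hρ : spectralRadius ℂ W = (‖ψ a‖₊ : ℝ≥0∞) * spectralRadius ℂ C)
    (hCn : IsNormaloid C) :
    IsNormaloid W := by
  have hM : ∀ z ∈ unitDisk, ‖ψ z‖ ≤ ‖ψ a‖ := by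
    intro z hz
    rw [← hψa]
    exact le_csSup hψ.2 ⟨z, hz, rfl⟩
  have hWf : ∀ f : H2, ‖W f‖ ≤ ‖ψ a‖ * ‖C f‖ := by
    intro f
    refine aux_mult_bound ψ _ (norm_nonneg _) hM (C f) (W f) fun z hz => ?_
    rw [hW f z hz, hC f z hz]
  have hop : ‖W‖ ≤ ‖ψ a‖ * ‖C‖ := by
    refine W.opNorm_le_bound (by positivity) fun f => ?_
    calc ‖W f‖ ≤ ‖ψ a‖ * ‖C f‖ := hWf f
      _ ≤ ‖ψ a‖ * (‖C‖ * ‖f‖) := by gcongr; exact C.le_opNorm f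
      _ = ‖ψ a‖ * ‖C‖ * ‖f‖ := by ring
  refine le_antisymm (aux_spec_le W) ?_
  rw [hρ, hCn, ← ENNReal.coe_mul]
  refine ENNReal.coe_le_coe.mpr ?_
  rw [← NNReal.coe_le_coe, NNReal.coe_mul, coe_nnnorm, coe_nnnorm, coe_nnnorm]
  exact hop
end
end
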